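/- In the monoid S, for every integer k ≥ 1 one has bS ∩ a^k S = bS ∩ a^k b S = ⋃_{n ∈ ℤ} b·x_n·S ∪ ⋃_{n ∈ ℤ} b·y_n·S. -/

import Mathlib

/-- The alphabet of the monoid `S`: letters `a`, `b` and `x n`, `y n` for `n : ℤ`. -/
inductive SGen : Type
  | a : SGen
  | b : SGen
  | x : ℤ → SGen
  | y : ℤ → SGen

/-- The defining relations of `S`: `a·b·x n = b·x n` and `a·b·y n = b·y (n+1)` for `n ∈ ℤ`. -/
inductive SRel : FreeMonoid SGen → FreeMonoid SGen → Prop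
  | xr (n : ℤ) : SRel (.of .a * .of .b * .of (.x n)) (.of .b * .of (.x n))
  | yr (n : ℤ) : SRel (.of .a * .of .b * .of (.y n)) (.of .b * .of (.y (n + 1)))

/-- The monoid `S` presented by the generators `SGen` and the relations `SRel`. -/
abbrev S : Type := PresentedMonoid SRel

/-- The images of the generators in `S`. -/
def gen (g : SGen) : S := PresentedMonoid.of SRel g

/-- The principal right ideal `sS` of a monoid. -/
def rIdeal {M : Type*} [Monoid M] (s : M) : Set M := {m | ∃ u, m = s * u}

/- ### Auxiliary machinery -/

lemma gen_mk (c : SGen) : gen c = PresentedMonoid.mk SRel (.of c) := rfl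

lemma relS_x (n : ℤ) : gen .a * (gen .b * gen (.x n)) = gen .b * gen (.x n) := by
  have : PresentedMonoid.mk SRel (.of .a * .of .b * .of (.x n)) =
      PresentedMonoid.mk SRel (.of .b * .of (.x n)) :=
    Quotient.sound (ConGen.Rel.of _ _ (SRel.xr n))
  simpa [map_mul, gen_mk, mul_assoc] using this

lemma relS_y (n : ℤ) : gen .a * (gen .b * gen (.y n)) = gen .b * gen (.y (n + 1)) := by
  have : PresentedMonoid.mk SRel (.of .a * .of .b * .of (.y n)) =
      PresentedMonoid.mk SRel (.of .b * .of (.y (n + 1))) :=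
    Quotient.sound (ConGen.Rel.of _ _ (SRel.yr n))
  simpa [map_mul, gen_mk, mul_assoc] using this

lemma relS_x_u (n : ℤ) (u : S) :
    gen .a * (gen .b * (gen (.x n) * u)) = gen .b * (gen (.x n) * u) := by
  simpa [mul_assoc] using congrArg (· * u) (relS_x n)

lemma relS_y_u (n : ℤ) (u : S) :
    gen .a * (gen .b * (gen (.y n) * u)) = gen .b * (gen (.y (n + 1)) * u) := by
  simpa [mul_assoc] using congrArg (· * u) (relS_y n)

/-- One rewriting step from the right. -/
def step : SGen → List SGen → List SGen
  | .a, (.b :: .x n :: t) => .b :: .x n :: t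
  | .a, (.b :: .y n :: t) => .b :: .y (n + 1) :: t
  | c, t => c :: t

lemma step_b (t : List SGen) : step .b t = .b :: t := rfl
lemma step_x (n : ℤ) (t : List SGen) : step (.x n) t = .x n :: t := rfl
lemma step_y (n : ℤ) (t : List SGen) : step (.y n) t = .y n :: t := rfl

lemma step_a_cases (t : List SGen) :
    step .a t = .a :: t ∨
    (∃ n t', t = .b :: .x n :: t' ∧ step .a t = .b :: .x n :: t') ∨
    (∃ n t', t = .b :: .y n :: t' ∧ step .a t = .b :: .y (n + 1) :: t') := by
  rcases t with _ | ⟨c, t2⟩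
  · exact Or.inl rfl
  rcases c with _ | _ | n | n
  · exact Or.inl rfl
  · rcases t2 with _ | ⟨c2, t3⟩
    · exact Or.inl rfl
    rcases c2 with _ | _ | n | n
    · exact Or.inl rfl
    · exact Or.inl rfl
    · exact Or.inr (Or.inl ⟨n, t3, rfl, rfl⟩)
    · exact Or.inr (Or.inr ⟨n, t3, rfl, rfl⟩)
  · exact Or.inl rfl
  · exact Or.inl rfl

/-- `step` as a map into the endomorphism monoid of lists. -/
def stepE (c : SGen) : Function.End (List SGen) := step c

lemma stepE_rel : ∀ w₁ w₂ : FreeMonoid SGen, SRel w₁ w₂ →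
    FreeMonoid.lift stepE w₁ = FreeMonoid.lift stepE w₂ := by
  intro w₁ w₂ h
  cases h with
  | xr n => funext t; rfl
  | yr n => funext t; rfl

/-- The normal-form action of `S` on lists. -/
def φ : S →* Function.End (List SGen) := PresentedMonoid.lift stepE stepE_rel

/-- The normal form of an element of `S`. -/
def N (s : S) : List SGen := φ s []

lemma φ_gen (c : SGen) : φ (gen c) = stepE c := rfl

lemma N_gen_mul (c : SGen) (u : S) : N (gen c * u) = step c (N u) := by
  show φ (gen c * u) [] = _
  rw [map_mul]
  rfl

/-- Multiply out a list of generators. -/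
def θ : List SGen → S
  | [] => 1
  | c :: t => gen c * θ t

lemma θ_step (c : SGen) (t : List SGen) : θ (step c t) = gen c * θ t := by
  rcases c with _ | _ | n | n
  · rcases step_a_cases t with h | ⟨n, t', rfl, h⟩ | ⟨n, t', rfl, h⟩
    · rw [h]; rfl
    · rw [h]
      exact (relS_x_u n (θ t')).symm
    · rw [h]
      exact (relS_y_u n (θ t')).symm
  · rfl
  · rfl
  · rfl

lemma θ_φ (s : S) (t : List SGen) : θ (φ s t) = s * θ t := by
  induction s using PresentedMonoid.inductionOn with
  | h w =>
    induction w using FreeMonoid.inductionOn' with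
    | one => simp [map_one]; rfl
    | of_mul c w ih =>
      rw [map_mul, map_mul]
      have h1 : PresentedMonoid.mk SRel (FreeMonoid.of c) = gen c := rfl
      rw [h1]
      have : φ (gen c) (φ (PresentedMonoid.mk SRel w) t) =
          step c (φ (PresentedMonoid.mk SRel w) t) := rfl
      show θ ((φ (gen c) * φ (PresentedMonoid.mk SRel w)) t) = _
      show θ (φ (gen c) (φ (PresentedMonoid.mk SRel w) t)) = _
      rw [this, θ_step, ih, mul_assoc]

lemma θ_N (s : S) : θ (N s) = s := by
  rw [N, θ_φ]
  show s * 1 = s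
  rw [mul_one]

/- powers acting on `b xₙ`, `b yₙ` -/

lemma pow_bx (k : ℕ) (n : ℤ) : gen .a ^ k * (gen .b * gen (.x n)) = gen .b * gen (.x n) := by
  induction k with
  | zero => rw [pow_zero, one_mul]
  | succ k ih => rw [pow_succ, mul_assoc, relS_x, ih]

lemma pow_by (k : ℕ) (n : ℤ) :
    gen .a ^ k * (gen .b * gen (.y n)) = gen .b * gen (.y (n + k)) := by
  induction k generalizing n with
  | zero => rw [pow_zero, one_mul]; norm_num
  | succ k ih =>
    rw [pow_succ', mul_assoc, ih, relS_y]
    congr 1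
    congr 1
    push_cast
    ring

/-- The hard direction: anything in `bS ∩ aS` lies in some `b xₙ S` or `b yₙ S`. -/
lemma hard {s : S} (hb : s ∈ rIdeal (gen .b)) (ha : s ∈ rIdeal (gen .a)) :
    s ∈ (⋃ n : ℤ, rIdeal (gen .b * gen (.x n))) ∪ ⋃ n : ℤ, rIdeal (gen .b * gen (.y n)) := by
  obtain ⟨u, hu⟩ := hb
  obtain ⟨v, hv⟩ := ha
  have h1 : N s = .b :: N u := by rw [hu, N_gen_mul, step_b]
  have h2 : N s = step .a (N v) := by rw [hv, N_gen_mul]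
  rcases step_a_cases (N v) with h | ⟨n, t', ht, h⟩ | ⟨n, t', ht, h⟩
  · rw [h] at h2; rw [h1] at h2; exact absurd h2 (by simp)
  · left
    refine Set.mem_iUnion.2 ⟨n, θ t', ?_⟩
    have : N s = .b :: .x n :: t' := h2.trans h
    calc s = θ (N s) := (θ_N s).symm
    _ = gen .b * (gen (.x n) * θ t') := by rw [this]; rfl
    _ = gen .b * gen (.x n) * θ t' := by rw [mul_assoc]
  · right
    refine Set.mem_iUnion.2 ⟨n + 1, θ t', ?_⟩
    have : N s = .b :: .y (n + 1) :: t' := h2.trans h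
    calc s = θ (N s) := (θ_N s).symm
    _ = gen .b * (gen (.y (n + 1)) * θ t') := by rw [this]; rfl
    _ = gen .b * gen (.y (n + 1)) * θ t' := by rw [mul_assoc]

/-- For every `k ≥ 1`, `bS ∩ aᵏS = bS ∩ aᵏbS = ⋃ₙ b xₙ S ∪ ⋃ₙ b yₙ S`. -/
theorem S_bS_inter_akS (k : ℕ) (hk : 1 ≤ k) :
    rIdeal (gen .b) ∩ rIdeal (gen .a ^ k) = rIdeal (gen .b) ∩ rIdeal (gen .a ^ k * gen .b) ∧
    rIdeal (gen .b) ∩ rIdeal (gen .a ^ k) =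
      (⋃ n : ℤ, rIdeal (gen .b * gen (.x n))) ∪ ⋃ n : ℤ, rIdeal (gen .b * gen (.y n)) := by
  obtain ⟨j, rfl⟩ : ∃ j, k = j + 1 := ⟨k - 1, (Nat.succ_pred_eq_of_pos hk).symm⟩
  set k := j + 1 with hkdef
  -- the hard inclusion, for the given k
  have key : rIdeal (gen .b) ∩ rIdeal (gen .a ^ k) ⊆
      (⋃ n : ℤ, rIdeal (gen .b * gen (.x n))) ∪ ⋃ n : ℤ, rIdeal (gen .b * gen (.y n)) := by
    rintro s ⟨hb, v, hv⟩
    apply hard hb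
    exact ⟨gen .a ^ j * v, by rw [hv, hkdef, pow_succ', mul_assoc]⟩
  -- the union is contained in bS ∩ aᵏbS
  have sub1 : ((⋃ n : ℤ, rIdeal (gen .b * gen (.x n))) ∪ ⋃ n : ℤ, rIdeal (gen .b * gen (.y n)))
      ⊆ rIdeal (gen .b) ∩ rIdeal (gen .a ^ k * gen .b) := by
    rintro s (h | h) <;> rw [Set.mem_iUnion] at h <;> obtain ⟨n, u, rfl⟩ := h
    · constructor
      · exact ⟨gen (.x n) * u, by rw [mul_assoc]⟩
      · refine ⟨gen (.x n) * u, ?_⟩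
        conv_lhs => rw [← pow_bx k n]
        simp [mul_assoc]
    · constructor
      · exact ⟨gen (.y n) * u, by rw [mul_assoc]⟩
      · refine ⟨gen (.y (n - k)) * u, ?_⟩
        have h' : gen .b * gen (.y n) = gen .a ^ k * (gen .b * gen (.y (n - k))) := by
          rw [pow_by]; congr 2; ring
        conv_lhs => rw [h']
        simp [mul_assoc]
    -- done
  have sub2 : rIdeal (gen .a ^ k * gen .b) ⊆ rIdeal (gen .a ^ k) := by
    rintro s ⟨u, rfl⟩
    exact ⟨gen .b * u, by rw [mul_assoc]⟩
  constructor
  · apply Set.Subset.antisymm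
    · exact fun s hs => ⟨hs.1, (sub1 (key hs)).2⟩
    · exact fun s hs => ⟨hs.1, sub2 hs.2⟩
  · apply Set.Subset.antisymm key
    exact fun s hs => ⟨(sub1 hs).1, sub2 (sub1 hs).2⟩
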